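/- Let δ = (x-(α+1))D - xD^2 and write δ(δ-1)⋯(δ-(n-1)) = Σ_{k=n}^{2n} q_k(x)D^k with polynomial coefficients q_k. Then Σ_{k=n}^{2n} q_k(x) = (-1)^n·∏_{k=1}^n (α+k), a constant independent of x. -/

import Mathlib

open Polynomial

/-- The operator `δ[p] = (x-(α+1))p' - x p''`. -/
noncomputable def laguerreDelta (α : ℝ) (p : Polynomial ℝ) : Polynomial ℝ :=
  (X - C (α + 1)) * derivative p - X * derivative (derivative p)

/-- The operator `(δ-(m-1))⋯(δ-1)δ` (which equals `δ(δ-1)⋯(δ-(m-1))` since the factors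
commute). -/
noncomputable def laguerreDeltaFalling (α : ℝ) : ℕ → Polynomial ℝ → Polynomial ℝ
  | 0, p => p
  | (m + 1), p =>
      laguerreDelta α (laguerreDeltaFalling α m p) - (m : ℝ) • laguerreDeltaFalling α m p

noncomputable def expTrunc (N : ℕ) : Polynomial ℝ :=
  ∑ j ∈ Finset.range (N + 1), C ((j.factorial : ℝ)⁻¹) * X ^ j

lemma expTrunc_coeff (N j : ℕ) :
    (expTrunc N).coeff j = if j ≤ N then ((j.factorial : ℝ))⁻¹ else 0 := by
  rw [expTrunc, finset_sum_coeff]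
  simp only [coeff_C_mul, coeff_X_pow, mul_ite, mul_one, mul_zero]
  rw [Finset.sum_ite_eq (Finset.range (N + 1)) j (fun i => ((i.factorial : ℝ))⁻¹)]
  simp [Nat.lt_succ_iff]

lemma derivative_expTrunc_succ (N : ℕ) :
    derivative (expTrunc (N + 1)) = expTrunc N := by
  ext j
  rw [coeff_derivative, expTrunc_coeff, expTrunc_coeff]
  by_cases h : j ≤ N
  · rw [if_pos (by omega), if_pos h, Nat.factorial_succ]
    push_cast
    rw [mul_inv]
    field_simp
  · rw [if_neg (by omega), if_neg h, zero_mul]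

lemma derivative_expTrunc_zero : derivative (expTrunc 0) = 0 := by
  simp [expTrunc]

lemma iterate_derivative_expTrunc (N k : ℕ) (h : k ≤ N) :
    derivative^[k] (expTrunc N) = expTrunc (N - k) := by
  induction k with
  | zero => simp
  | succ k ih =>
    rw [Function.iterate_succ_apply', ih (by omega)]
    obtain ⟨M, hM⟩ : ∃ M, N - k = M + 1 := ⟨N - (k+1), by omega⟩
    rw [hM, derivative_expTrunc_succ]
    congr 1
    omega

lemma laguerreDelta_add (α : ℝ) (p q : Polynomial ℝ) :
    laguerreDelta α (p + q) = laguerreDelta α p + laguerreDelta α q := by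
  simp only [laguerreDelta, derivative_add]; ring

lemma laguerreDelta_C_mul (α c : ℝ) (p : Polynomial ℝ) :
    laguerreDelta α (C c * p) = C c * laguerreDelta α p := by
  simp only [laguerreDelta, derivative_C_mul]; ring

lemma expTrunc_succ (N : ℕ) :
    expTrunc (N + 1) = expTrunc N + C (((N + 1).factorial : ℝ)⁻¹) * X ^ (N + 1) := by
  rw [expTrunc, expTrunc, Finset.sum_range_succ]

lemma laguerreDelta_expTrunc (α : ℝ) (M : ℕ) :
    laguerreDelta α (expTrunc (M + 1)) =
      C ((M.factorial : ℝ)⁻¹) * X ^ (M + 1) - C (α + 1) * expTrunc M := by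
  cases M with
  | zero =>
    rw [laguerreDelta, derivative_expTrunc_succ, derivative_expTrunc_zero]
    simp [expTrunc]
  | succ m =>
    rw [laguerreDelta, derivative_expTrunc_succ, derivative_expTrunc_succ,
      expTrunc_succ m]
    ring

lemma laguerreDelta_coeff_vanish (α : ℝ) {p : Polynomial ℝ} {N a : ℕ}
    (h : ∀ j, j + a ≤ N → p.coeff j = 0) :
    ∀ j, j + a + 1 ≤ N → (laguerreDelta α p).coeff j = 0 := by
  intro j hj
  have hd : ∀ j, j + a + 1 ≤ N → (derivative p).coeff j = 0 := by
    intro i hi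
    rw [coeff_derivative, h (i + 1) (by omega), zero_mul]
  have hdd : ∀ j, j + a + 2 ≤ N → (derivative (derivative p)).coeff j = 0 := by
    intro i hi
    rw [coeff_derivative, hd (i + 1) (by omega), zero_mul]
  rw [laguerreDelta, coeff_sub, sub_mul, coeff_sub, coeff_C_mul]
  cases j with
  | zero =>
    rw [mul_coeff_zero, mul_coeff_zero, coeff_X_zero, zero_mul, zero_mul,
      hd 0 (by omega), mul_zero]
    ring
  | succ i =>
    rw [coeff_X_mul, coeff_X_mul, hd (i + 1) (by omega), hd i (by omega),
      hdd i (by omega)]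
    ring

noncomputable def cSeq (α : ℝ) : ℕ → ℝ
  | 0 => 1
  | (m + 1) => -(α + 1 + m) * cSeq α m

lemma cSeq_eq (α : ℝ) (n : ℕ) :
    cSeq α n = (-1) ^ n * ∏ k ∈ Finset.Icc 1 n, (α + k) := by
  induction n with
  | zero => simp [cSeq]
  | succ m ih =>
    rw [cSeq, ih, Finset.prod_Icc_succ_top (by omega)]
    push_cast
    ring

lemma key (α : ℝ) (N : ℕ) : ∀ (m : ℕ), ∀ j, j + 2 * m ≤ N →
    (laguerreDeltaFalling α m (expTrunc N)).coeff j
      = cSeq α m * (expTrunc (N - m)).coeff j := by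
  intro m
  induction m with
  | zero => intro j _; simp [laguerreDeltaFalling, cSeq]
  | succ m ih =>
    intro j hj
    set L := laguerreDeltaFalling α m (expTrunc N) with hL
    set E := L - C (cSeq α m) * expTrunc (N - m) with hEdef
    have hE : ∀ i, i + 2 * m ≤ N → E.coeff i = 0 := by
      intro i hi
      rw [hEdef, coeff_sub, coeff_C_mul, ih i hi, sub_self]
    have hdE : ∀ i, i + 2 * m + 1 ≤ N → (laguerreDelta α E).coeff i = 0 :=
      laguerreDelta_coeff_vanish α hE
    obtain ⟨M, hM⟩ : ∃ M, N - m = M + 1 := ⟨N - (m + 1), by omega⟩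
    have hNm1 : N - (m + 1) = M := by omega
    have hLsplit : L = C (cSeq α m) * expTrunc (M + 1) + E := by
      rw [hEdef, hM]; ring
    have hδL : laguerreDelta α L =
        C (cSeq α m) * (C ((M.factorial : ℝ)⁻¹) * X ^ (M + 1) - C (α + 1) * expTrunc M)
          + laguerreDelta α E := by
      rw [hLsplit, laguerreDelta_add, laguerreDelta_C_mul, laguerreDelta_expTrunc]
    have hcoeffE : E.coeff j = 0 := hE j (by omega)
    have hcoeffdE : (laguerreDelta α E).coeff j = 0 := hdE j (by omega)
    have hXpow : (X ^ (M + 1) : Polynomial ℝ).coeff j = 0 := by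
      rw [coeff_X_pow, if_neg (by omega)]
    have hsame : (expTrunc (M + 1)).coeff j = (expTrunc M).coeff j := by
      rw [expTrunc_coeff, expTrunc_coeff, if_pos (by omega), if_pos (by omega)]
    show (laguerreDelta α L - (m : ℝ) • L).coeff j = _
    rw [coeff_sub, coeff_smul, hδL, hLsplit, coeff_add, coeff_add, coeff_C_mul,
      coeff_C_mul, coeff_sub, coeff_C_mul, coeff_C_mul, hXpow,
      hcoeffE, hcoeffdE, hsame, hNm1]
    rw [cSeq]
    simp only [smul_eq_mul]
    ring

/-- If `δ(δ-1)⋯(δ-(n-1)) = ∑_{k=n}^{2n} q_k(x) D^k` as operators on `ℝ[x]`, then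
`∑_{k=n}^{2n} q_k(x) = (-1)^n ∏_{k=1}^n (α+k)`, a constant. -/
theorem deltaFalling_coeff_sum (α : ℝ) (n : ℕ) (hn : 1 ≤ n) (q : ℕ → Polynomial ℝ)
    (hq : ∀ p : Polynomial ℝ,
      laguerreDeltaFalling α n p = ∑ k ∈ Finset.Icc n (2 * n), q k * derivative^[k] p) :
    ∑ k ∈ Finset.Icc n (2 * n), q k =
      Polynomial.C ((-1) ^ n * ∏ k ∈ Finset.Icc 1 n, (α + k)) := by
  set c : ℝ := (-1) ^ n * ∏ k ∈ Finset.Icc 1 n, (α + k) with hc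
  set Q : Polynomial ℝ := ∑ k ∈ Finset.Icc n (2 * n), q k with hQ
  set d : ℕ := Q.natDegree with hd
  set N : ℕ := 2 * n + d + 1 with hN
  set M : ℕ := d + 1 with hMdef
  have hmain := hq (expTrunc N)
  -- coefficient comparison up to degree d
  have hcoeffs : ∀ j, j ≤ d → ((Q - C c) * expTrunc M).coeff j = 0 := by
    intro j hj
    have hLHS : (laguerreDeltaFalling α n (expTrunc N)).coeff j
        = (C c * expTrunc M).coeff j := by
      rw [key α N n j (by omega), coeff_C_mul, cSeq_eq, ← hc]
      congr 1
      rw [expTrunc_coeff, expTrunc_coeff, if_pos (by omega), if_pos (by omega)]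
    have hRHS : (∑ k ∈ Finset.Icc n (2 * n), q k * derivative^[k] (expTrunc N)).coeff j
        = (Q * expTrunc M).coeff j := by
      rw [hQ, Finset.sum_mul, finset_sum_coeff, finset_sum_coeff]
      apply Finset.sum_congr rfl
      intro k hk
      rw [Finset.mem_Icc] at hk
      rw [iterate_derivative_expTrunc N k (by omega), coeff_mul, coeff_mul]
      apply Finset.sum_congr rfl
      intro x hx
      rw [Finset.HasAntidiagonal.mem_antidiagonal] at hx
      congr 1
      rw [expTrunc_coeff, expTrunc_coeff, if_pos (by omega), if_pos (by omega)]
    rw [sub_mul, coeff_sub, ← hRHS, ← hLHS, hmain, sub_self]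
  -- conclude Q = C c
  rw [← sub_eq_zero]
  by_contra hR
  set R : Polynomial ℝ := Q - C c with hRdef
  set t : ℕ := R.natTrailingDegree with ht
  have htd : t ≤ d := by
    calc t ≤ R.natDegree := natTrailingDegree_le_natDegree R
    _ ≤ max Q.natDegree (C c).natDegree := natDegree_sub_le Q (C c)
    _ ≤ d := by simp [hd]
  have h0 : (R * expTrunc M).coeff t = 0 := hcoeffs t htd
  rw [coeff_mul] at h0
  rw [Finset.sum_eq_single (t, 0)] at h0
  · have h1 : (expTrunc M).coeff 0 = 1 := by
      rw [expTrunc_coeff, if_pos (by omega)]; simp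
    rw [h1, mul_one] at h0
    exact hR (trailingCoeff_eq_zero.mp h0)
  · intro b hb hbne
    rw [Finset.HasAntidiagonal.mem_antidiagonal] at hb
    have hb1 : b.1 < t := by
      rcases Nat.lt_or_ge b.1 t with h | h
      · exact h
      · exfalso; apply hbne
        have : b.1 = t := by omega
        have : b.2 = 0 := by omega
        exact Prod.ext (by omega) this
    rw [coeff_eq_zero_of_lt_natTrailingDegree hb1, zero_mul]
  · intro hmem
    exfalso; apply hmem
    rw [Finset.HasAntidiagonal.mem_antidiagonal]
    simp
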